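/- Let B₁ and B₂ be Boolean algebras, h : B₁ → B₂ a surjective homomorphism of Boolean algebras (preserving ⊤, ⊥, meet, join, and complement), U₂ an ultrafilter on B₂, and U₁ = h⁻¹(U₂). Then U₁ is an ultrafilter on B₁, and if U₁ is λ-OK then U₂ is λ-OK. -/

import Mathlib

/-- `U` is an ultrafilter on the Boolean algebra `B`: `⊥ ∉ U`, upward closed, closed under
binary meets, and for every `a` either `a ∈ U` or `aᶜ ∈ U`. -/
def IsUltrafilterOn {B : Type*} [BooleanAlgebra B] (U : Set B) : Prop :=
  ⊥ ∉ U ∧ (∀ a ∈ U, ∀ b : B, a ≤ b → b ∈ U) ∧ (∀ a ∈ U, ∀ b ∈ U, a ⊓ b ∈ U) ∧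
    ∀ a : B, a ∈ U ∨ aᶜ ∈ U

/-- `b` is a multiplicative distribution on `B` indexed by finite subsets of `Λ`:
all values nonzero, `b ∅ = ⊤`, antitone with respect to inclusion, and multiplicative. -/
def IsMultDistribution {B : Type*} [BooleanAlgebra B] {Λ : Type*} (b : Finset Λ → B) : Prop :=
  (∀ s : Finset Λ, b s ≠ ⊥) ∧ b ∅ = ⊤ ∧ (∀ s t : Finset Λ, s ⊆ t → b t ≤ b s) ∧
    ∀ s : Finset Λ, b s = s.inf fun α => b {α}

/-- `U` is `Λ`-OK: every decreasing sequence from `U` starting at `⊤` has a multiplicative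
refinement in `U` indexed by the finite subsets of `Λ`. -/
def IsOKFor {B : Type*} [BooleanAlgebra B] (Λ : Type*) (U : Set B) : Prop :=
  ∀ a : ℕ → B, (∀ n, a n ∈ U) → Antitone a → a 0 = ⊤ →
    ∃ b : Finset Λ → B, IsMultDistribution b ∧ (∀ s : Finset Λ, b s ∈ U) ∧
      ∀ s : Finset Λ, b s ≤ a s.card

/-- if `h : B₁ → B₂` is a surjective homomorphism of Boolean algebras and `U₂`
is an ultrafilter on `B₂`, then `U₁ = h⁻¹(U₂)` is an ultrafilter on `B₁`, and if `U₁` is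
`λ`-OK then so is `U₂`. -/
theorem auxFinInf {B₁ : Type u} {B₂ : Type v} [BooleanAlgebra B₁] [BooleanAlgebra B₂]
    (h : B₁ → B₂) (htop : h ⊤ = ⊤) (hinf : ∀ a b : B₁, h (a ⊓ b) = h a ⊓ h b)
    {Λ : Type*} (s : Finset Λ) (f : Λ → B₁) :
    h (s.inf f) = s.inf fun α => h (f α) := by
  induction s using Finset.cons_induction with
  | empty => simpa using htop
  | cons x s hx ih => simp [Finset.inf_cons, hinf, ih]

theorem stmt5 {B₁ : Type u} {B₂ : Type v} [BooleanAlgebra B₁] [BooleanAlgebra B₂]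
    (h : B₁ → B₂) (hsurj : Function.Surjective h)
    (htop : h ⊤ = ⊤) (hbot : h ⊥ = ⊥)
    (hinf : ∀ a b : B₁, h (a ⊓ b) = h a ⊓ h b) (hsup : ∀ a b : B₁, h (a ⊔ b) = h a ⊔ h b)
    (hcompl : ∀ a : B₁, h aᶜ = (h a)ᶜ)
    (U₂ : Set B₂) (hU₂ : IsUltrafilterOn U₂) (lam : Cardinal.{w}) :
    IsUltrafilterOn (h ⁻¹' U₂) ∧
      (IsOKFor lam.ord.ToType (h ⁻¹' U₂) → IsOKFor lam.ord.ToType U₂) := by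
  obtain ⟨hbotU, hup, hmeet, hdich⟩ := hU₂
  have hmono : ∀ a b : B₁, a ≤ b → h a ≤ h b := by
    intro a b hab
    have : h a ⊓ h b = h a := by rw [← hinf, inf_eq_left.mpr hab]
    exact inf_eq_left.mp this
  constructor
  · refine ⟨by simp [Set.mem_preimage, hbot, hbotU], ?_, ?_, ?_⟩
    · intro a ha b hab
      exact hup _ ha _ (hmono _ _ hab)
    · intro a ha b hb
      simp only [Set.mem_preimage, hinf]
      exact hmeet _ ha _ hb
    · intro a
      rcases hdich (h a) with h1 | h1
      · exact Or.inl h1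
      · exact Or.inr (by simpa [Set.mem_preimage, hcompl] using h1)
  · intro hOK a haU hanti ha0
    -- lift a to B₁
    choose c hc using fun n => hsurj (a n)
    set a' : ℕ → B₁ := fun n => (Finset.range (n + 1)).inf fun k => if k = 0 then ⊤ else c k
      with ha'def
    have ha'h : ∀ n, h (a' n) = a n := by
      intro n
      rw [ha'def]
      simp only
      rw [auxFinInf h htop hinf]
      have : ((Finset.range (n + 1)).inf fun k => h (if k = 0 then ⊤ else c k)) = a n := by
        induction n with
        | zero => simp [htop, ← ha0]
        | succ m ih =>
          rw [Finset.range_add_one, Finset.inf_insert, ih]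
          rw [if_neg (Nat.succ_ne_zero m), hc]
          exact inf_eq_left.mpr (hanti (Nat.le_succ m))
      exact this
    have ha'U : ∀ n, a' n ∈ h ⁻¹' U₂ := fun n => by
      simp [Set.mem_preimage, ha'h n, haU n]
    have ha'anti : Antitone a' := by
      intro m n hmn
      exact Finset.inf_mono (by
        intro k hk
        simp only [Finset.mem_range] at *
        omega)
    have ha'0 : a' 0 = ⊤ := by simp [ha'def]
    obtain ⟨b, ⟨hbne, hbempty, hbanti, hbmult⟩, hbU, hble⟩ := hOK a' ha'U ha'anti ha'0
    refine ⟨fun s => h (b s), ⟨?_, ?_, ?_, ?_⟩, ?_, ?_⟩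
    · intro s hsb
      exact hbotU (hsb ▸ hbU s)
    · show h (b ∅) = ⊤
      rw [hbempty, htop]
    · intro s t hst
      exact hmono _ _ (hbanti s t hst)
    · intro s
      show h (b s) = _
      rw [hbmult s, auxFinInf h htop hinf]
    · intro s
      exact hbU s
    · intro s
      calc h (b s) ≤ h (a' s.card) := hmono _ _ (hble s)
        _ = a s.card := ha'h _
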